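/- For every natural number n ≥ 0 and all real x and t, the n-th partial derivative with respect to t of x/(1+x²t²) satisfies ∂ⁿ/∂tⁿ ( x/(1+x²t²) ) = (−1)^(n+1) n! x^(n+1) / (2i) · ( 1/(xt+i)^(n+1) − 1/(xt−i)^(n+1) ), where the right-hand side is a complex expression whose value is real and i is the imaginary unit. -/

import Mathlib

open Complex

noncomputable def Eaux (x : ℝ) (n : ℕ) (z : ℂ) : ℂ :=
  (-1) ^ (n + 1) * (Nat.factorial n : ℂ) * (x : ℂ) ^ (n + 1) / (2 * I) *
    (1 / ((x : ℂ) * z + I) ^ (n + 1) - 1 / ((x : ℂ) * z - I) ^ (n + 1))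

lemma Eaux_ne1 (x t : ℝ) : (x : ℂ) * (t : ℝ) + I ≠ 0 := by
  intro h
  have := congrArg Complex.im h
  simp at this

lemma Eaux_ne2 (x t : ℝ) : (x : ℂ) * (t : ℝ) - I ≠ 0 := by
  intro h
  have := congrArg Complex.im h
  simp at this

lemma Eaux_hasDerivAt (x : ℝ) (n : ℕ) (t : ℝ) :
    HasDerivAt (Eaux x n) (Eaux x (n + 1) (t : ℂ)) (t : ℂ) := by
  have h1 := Eaux_ne1 x t
  have h2 := Eaux_ne2 x t
  have hl : HasDerivAt (fun z : ℂ => (x : ℂ) * z + I) (x : ℂ) (t : ℂ) := by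
    simpa using ((hasDerivAt_id ((t : ℝ) : ℂ)).const_mul (x : ℂ)).add_const I
  have hl2 : HasDerivAt (fun z : ℂ => (x : ℂ) * z - I) (x : ℂ) (t : ℂ) := by
    simpa using ((hasDerivAt_id ((t : ℝ) : ℂ)).const_mul (x : ℂ)).sub_const I
  have hp1 := (hl.pow (n + 1)).inv (pow_ne_zero _ h1)
  have hp2 := (hl2.pow (n + 1)).inv (pow_ne_zero _ h2)
  have H := ((hp1.sub hp2).const_mul
    ((-1) ^ (n + 1) * (Nat.factorial n : ℂ) * (x : ℂ) ^ (n + 1) / (2 * I)))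
  simp only [Nat.add_sub_cancel] at H
  push_cast at H
  have hEfun : Eaux x n = fun y : ℂ =>
      (-1) ^ (n + 1) * (Nat.factorial n : ℂ) * (x : ℂ) ^ (n + 1) / (2 * I) *
        ((((x : ℂ) * y + I) ^ (n + 1))⁻¹ - (((x : ℂ) * y - I) ^ (n + 1))⁻¹) := by
    funext z
    simp [Eaux, one_div]
  rw [hEfun]
  convert H using 1
  · rfl
  · rfl
  · rfl
  have key : ∀ A : ℂ, A ≠ 0 →
      -(((n : ℂ) + 1) * A ^ n * (x : ℂ)) / (A ^ (n + 1)) ^ 2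
        = -(((n : ℂ) + 1) * (x : ℂ)) / A ^ (n + 2) := by
    intro A hA
    rw [show (A ^ (n + 1)) ^ 2 = A ^ n * A ^ (n + 2) by ring,
      show -(((n : ℂ) + 1) * A ^ n * (x : ℂ)) = A ^ n * (-(((n : ℂ) + 1) * (x : ℂ))) by ring,
      mul_div_mul_left _ _ (pow_ne_zero n hA)]
  simp only [Pi.pow_apply]
  rw [key _ h1, key _ h2]
  simp only [Eaux, Nat.factorial_succ]
  push_cast
  ring

lemma Eaux_real (x : ℝ) (n : ℕ) (t : ℝ) : (((Eaux x n (t : ℂ)).re : ℝ) : ℂ) = Eaux x n (t : ℂ) := by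
  have h : (starRingEnd ℂ) (Eaux x n (t : ℂ)) = Eaux x n (t : ℂ) := by
    simp only [Eaux, map_mul, map_div₀, map_sub, map_add, map_pow, map_one, map_neg,
      map_ofNat, conj_I, conj_ofReal, map_natCast, one_div, map_inv₀]
    rw [show ((2 : ℂ) * -I) = -(2 * I) by ring, div_neg]
    ring
  exact Complex.conj_eq_iff_re.mp h

lemma Eaux_key (x : ℝ) (n : ℕ) : ∀ t : ℝ,
    ((iteratedDeriv n (fun s : ℝ => x / (1 + x ^ 2 * s ^ 2)) t : ℝ) : ℂ) = Eaux x n (t : ℂ) := by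
  induction n with
  | zero =>
    intro t
    have h1 := Eaux_ne1 x t
    have h2 := Eaux_ne2 x t
    have hr : (1 : ℝ) + x ^ 2 * t ^ 2 ≠ 0 := by positivity
    have hrc : ((1 : ℝ) + x ^ 2 * t ^ 2 : ℂ) ≠ 0 := by exact_mod_cast hr
    simp only [iteratedDeriv_zero, Eaux, pow_one, Nat.factorial_zero]
    push_cast
    rw [div_eq_iff (by push_cast at hrc ⊢; exact hrc)]
    field_simp
    ring_nf
    have hI3 : (I : ℂ) ^ 3 = -I := by
      rw [pow_succ, I_sq]; ring
    rw [hI3]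
    ring
  | succ n ih =>
    intro t
    rw [iteratedDeriv_succ]
    have hfun : iteratedDeriv n (fun s : ℝ => x / (1 + x ^ 2 * s ^ 2))
        = fun s : ℝ => (Eaux x n (s : ℂ)).re := by
      funext s
      have := congrArg Complex.re (ih s)
      simpa using this
    rw [hfun]
    have hd := (Eaux_hasDerivAt x n t).real_of_complex
    rw [hd.deriv]
    exact Eaux_real x (n + 1) t

open Complex in
theorem iteratedDeriv_integrand (n : ℕ) (x t : ℝ) :
    ((iteratedDeriv n (fun s : ℝ => x / (1 + x ^ 2 * s ^ 2)) t : ℝ) : ℂ) =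
      (-1) ^ (n + 1) * (Nat.factorial n : ℂ) * (x : ℂ) ^ (n + 1) / (2 * I) *
        (1 / ((x : ℂ) * (t : ℂ) + I) ^ (n + 1) - 1 / ((x : ℂ) * (t : ℂ) - I) ^ (n + 1)) := by
  exact Eaux_key x n t
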